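/- arXiv:2004.05307 — 2 statements merged into one kernel-verified Lean document; each statement's English description precedes it below -/
import Mathlib

section
/- Let χ²_d(κ) be a noncentral chi-square random variable with d degrees of freedom and noncentrality parameter κ. Then for any x > 0, Pr(χ²_d(κ) < d + κ − √((4d + 8κ)x)) ≤ exp(−x). -/
open MeasureTheory ProbabilityTheory Real
open scoped ENNReal NNReal

theorem integral_pi_prod (n : ℕ) :
    ∀ (ν : Fin n → Measure ℝ), (∀ i, SigmaFinite (ν i)) → ∀ (f : Fin n → ℝ → ℝ),
    ∫ z, ∏ i, f i (z i) ∂(Measure.pi ν) = ∏ i, ∫ y, f i y ∂(ν i) := by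
  induction n with
  | zero =>
    intro ν _ f
    simp [Measure.pi_empty_univ, Measure.real]
  | succ n ih =>
    intro ν hσ f
    haveI := hσ
    calc ∫ z, ∏ i, f i (z i) ∂(Measure.pi ν)
        = ∫ p : ℝ × (Fin n → ℝ), f 0 p.1 * ∏ i : Fin n, f (Fin.succ i) (p.2 i)
            ∂((ν 0).prod (Measure.pi fun i => ν (Fin.succ i))) := by
          rw [← ((MeasureTheory.measurePreserving_piFinSuccAbove ν 0).symm).integral_comp']
          simp_rw [MeasurableEquiv.piFinSuccAbove_symm_apply, Fin.insertNthEquiv,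
            Fin.prod_univ_succ, Fin.insertNth_zero, Equiv.coe_fn_mk, Fin.cons_succ,
            Fin.zero_succAbove, cast_eq, Fin.cons_zero]
      _ = (∫ y, f 0 y ∂(ν 0)) * ∏ i : Fin n, ∫ y, f (Fin.succ i) y ∂(ν (Fin.succ i)) := by
          rw [← ih (fun i => ν (Fin.succ i)) (fun i => hσ _) (fun i => f (Fin.succ i)),
            ← integral_prod_mul]
      _ = ∏ i, ∫ y, f i y ∂(ν i) := by rw [Fin.prod_univ_succ]

theorem gauss_sq_mgf (t m : ℝ) (ht : 0 ≤ t) :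
    ∫ z, Real.exp (-t * (z + m) ^ 2) ∂(gaussianReal 0 1) =
      Real.exp (-t * m ^ 2 / (1 + 2 * t)) / Real.sqrt (1 + 2 * t) := by
  have hs : (0:ℝ) < 1 + 2 * t := by linarith
  have ha : (0:ℝ) < (1 + 2 * t) / 2 := by linarith
  rw [gaussianReal_of_var_ne_zero 0 one_ne_zero]
  have hpdf : gaussianPDF 0 1 = fun y => ((gaussianPDFReal 0 1 y).toNNReal : ℝ≥0∞) := by
    ext y; simp [gaussianPDF, ENNReal.ofReal]
  rw [hpdf, integral_withDensity_eq_integral_smul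
      ((measurable_gaussianPDFReal 0 1).real_toNNReal)]
  have hsmul : ∀ z : ℝ, (Real.toNNReal (gaussianPDFReal 0 1 z)) • Real.exp (-t * (z + m) ^ 2)
      = ((Real.sqrt (2 * π))⁻¹ * Real.exp (-t * m ^ 2 / (1 + 2 * t))) *
        Real.exp (-((1 + 2 * t) / 2) * (z + 2 * t * m / (1 + 2 * t)) ^ 2) := by
    intro z
    rw [NNReal.smul_def, Real.coe_toNNReal _ (gaussianPDFReal_nonneg 0 1 z)]
    simp only [gaussianPDFReal, NNReal.coe_one, mul_one, sub_zero, smul_eq_mul]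
    rw [mul_assoc, ← Real.exp_add, mul_assoc, ← Real.exp_add]
    congr 2
    field_simp
    ring
  simp_rw [hsmul]
  rw [integral_const_mul, integral_add_right_eq_self
      (fun z => Real.exp (-((1 + 2 * t) / 2) * z ^ 2)) (2 * t * m / (1 + 2 * t)),
    integral_gaussian]
  have h1 : π / ((1 + 2 * t) / 2) = 2 * π / (1 + 2 * t) := by field_simp
  rw [h1, Real.sqrt_div (by positivity : (0:ℝ) ≤ 2 * π)]
  have h2 : Real.sqrt (2 * π) ≠ 0 := by positivity
  field_simp

theorem exp_le_one_add (u : ℝ) (hu : 0 ≤ u) : Real.exp (u - u ^ 2 / 2) ≤ 1 + u := by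
  have h1 : (0:ℝ) < 1 + u := by linarith
  rw [← Real.exp_log h1, Real.exp_le_exp]
  -- show u - u^2/2 ≤ log (1+u)
  set f : ℝ → ℝ := fun y => Real.log (1 + y) - y + y ^ 2 / 2 with hf
  have hmono : MonotoneOn f (Set.Ici (0:ℝ)) := by
    have hderiv : ∀ v ∈ Set.Ici (0:ℝ), HasDerivAt f ((1 + v)⁻¹ - 1 + v) v := by
      intro v hv
      have hv0 : (0:ℝ) ≤ v := hv
      have h1v : (1:ℝ) + v ≠ 0 := by positivity
      have hlog : HasDerivAt (fun y : ℝ => Real.log (1 + y)) ((1 + v)⁻¹) v := by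
        have := (Real.hasDerivAt_log h1v).comp v ((hasDerivAt_id v).const_add 1)
        simpa [Function.comp_def] using this
      convert (hlog.sub (hasDerivAt_id v)).add
        (((hasDerivAt_id v).pow 2).div_const 2) using 1
      · rfl
      · rfl
      · rfl
      · rw [show (2:ℕ) - 1 = 1 from rfl]
        simp only [id, pow_one, mul_one, Nat.cast_ofNat]
        ring
    apply monotoneOn_of_deriv_nonneg (convex_Ici 0)
    · exact ContinuousOn.add (ContinuousOn.sub
        (Real.continuousOn_log.comp (by fun_prop)
          (fun y hy => by simp only [Set.mem_Ici] at hy; intro h; simp at h; linarith))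
        continuousOn_id) (by fun_prop)
    · intro v hv
      rw [interior_Ici] at hv
      exact (hderiv v (Set.mem_Ici.mpr (le_of_lt (Set.mem_Ioi.mp hv)))).differentiableAt.differentiableWithinAt
    · intro v hv
      rw [interior_Ici] at hv
      rw [(hderiv v (Set.mem_Ici.mpr (le_of_lt (Set.mem_Ioi.mp hv)))).deriv]
      have hv1 : (0:ℝ) < 1 + v := by linarith [(Set.mem_Ioi.mp hv).le]
      have : (1 + v)⁻¹ - 1 + v = v ^ 2 / (1 + v) := by field_simp; ring
      rw [this]; positivity
  have h0 : f 0 ≤ f u := hmono (Set.self_mem_Ici) hu hu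
  simp only [hf] at h0
  simp only [add_zero, Real.log_one] at h0
  linarith

theorem LM_key_real_ineq (d : ℕ) (hd : 0 < d) (μ : Fin d → ℝ) (κ : ℝ) (hκ : κ = ∑ i, (μ i) ^ 2)
    (x : ℝ) (hx : 0 < x) :
    Real.exp ((Real.sqrt ((4 * d + 8 * κ) * x) / (2 * ((d : ℝ) + 2 * κ))) *
        ((d : ℝ) + κ - Real.sqrt ((4 * d + 8 * κ) * x))) *
      ∏ i : Fin d, (Real.exp (-(Real.sqrt ((4 * d + 8 * κ) * x) / (2 * ((d : ℝ) + 2 * κ))) *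
          (μ i) ^ 2 / (1 + 2 * (Real.sqrt ((4 * d + 8 * κ) * x) / (2 * ((d : ℝ) + 2 * κ))))) /
        Real.sqrt (1 + 2 * (Real.sqrt ((4 * d + 8 * κ) * x) / (2 * ((d : ℝ) + 2 * κ))))) ≤
    Real.exp (-x) := by
  have hκ0 : 0 ≤ κ := hκ ▸ Finset.sum_nonneg fun i _ => sq_nonneg _
  have hd1 : (1:ℝ) ≤ d := by exact_mod_cast hd
  set a : ℝ := Real.sqrt ((4 * d + 8 * κ) * x) with ha_def
  set D : ℝ := (d : ℝ) + 2 * κ with hD_def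
  have hD : 0 < D := by simp only [hD_def]; linarith
  set t : ℝ := a / (2 * D) with ht_def
  have harg : (0:ℝ) < (4 * d + 8 * κ) * x := by
    apply mul_pos (by linarith) hx
  have ha : 0 < a := Real.sqrt_pos.mpr harg
  have ha2 : a ^ 2 = 4 * D * x := by
    rw [ha_def, Real.sq_sqrt harg.le, hD_def]; ring
  have ht : 0 < t := div_pos ha (by linarith)
  set s : ℝ := 1 + 2 * t with hs_def
  have hs : (0:ℝ) < s := by simp only [hs_def]; linarith
  have hta : t * a = 2 * x := by
    rw [ht_def, div_mul_eq_mul_div, ← sq]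
    rw [ha2]; field_simp; ring
  have ht2 : t ^ 2 * D = x := by
    rw [ht_def, div_pow, ha2]; field_simp; ring
  -- rewrite the product
  have hprod : ∏ i : Fin d, (Real.exp (-t * (μ i) ^ 2 / s) / Real.sqrt s)
      = Real.exp (-t * κ / s) / (Real.sqrt s) ^ d := by
    rw [Finset.prod_div_distrib, Finset.prod_const, Finset.card_univ, Fintype.card_fin,
      ← Real.exp_sum]
    congr 1
    have h : ∀ i : Fin d, -t * μ i ^ 2 / s = (-t / s) * μ i ^ 2 := fun i => by ring
    simp_rw [h, ← Finset.mul_sum, ← hκ]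
    ring
  rw [hprod]
  -- key bounds
  have hsqrt_ge : Real.exp (t - t ^ 2) ≤ Real.sqrt s := by
    have h2 : Real.exp (t - t ^ 2) ^ 2 ≤ s := by
      rw [← Real.exp_nat_mul, show ((2:ℕ):ℝ) * (t - t ^ 2) = 2 * t - (2 * t) ^ 2 / 2 by
        push_cast; ring]
      exact exp_le_one_add (2 * t) (by linarith)
    rw [Real.le_sqrt (Real.exp_nonneg _)]
    · exact h2
    · exact hs.le
  have hpow : Real.exp ((d : ℝ) * (t - t ^ 2)) ≤ (Real.sqrt s) ^ d := by
    rw [Real.exp_nat_mul]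
    exact pow_le_pow_left₀ (Real.exp_nonneg _) hsqrt_ge d
  have hκs : t * κ * (1 - 2 * t) ≤ t * κ / s := by
    rw [le_div_iff₀ hs, hs_def]
    nlinarith [mul_nonneg (mul_nonneg ht.le hκ0) (sq_nonneg t)]
  have ht2' : t ^ 2 * ((d : ℝ) + 2 * κ) = x := by rw [← hD_def]; exact ht2
  rw [← mul_div_assoc, div_le_iff₀ (by positivity : (0:ℝ) < (Real.sqrt s) ^ d)]
  calc Real.exp (t * ((d : ℝ) + κ - a)) * (Real.exp (-t * κ / s))
      = Real.exp (t * ((d : ℝ) + κ - a) - t * κ / s) := by rw [← Real.exp_add]; ring_nf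
    _ ≤ Real.exp (-x + (d : ℝ) * (t - t ^ 2)) := by
        rw [Real.exp_le_exp]
        have : t * ((d : ℝ) + κ - a) - t * κ / s ≤
            t * ((d : ℝ) + κ - a) - t * κ * (1 - 2 * t) := by linarith
        refine this.trans ?_
        nlinarith [hta, ht2']
    _ = Real.exp (-x) * Real.exp ((d : ℝ) * (t - t ^ 2)) := by rw [← Real.exp_add]
    _ ≤ Real.exp (-x) * (Real.sqrt s) ^ d := by
        exact mul_le_mul_of_nonneg_left hpow (Real.exp_nonneg _)

theorem LM_chernoff_step (d : ℕ) (μ : Fin d → ℝ) (t c : ℝ) (ht : 0 ≤ t) :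
    (Measure.pi fun _ : Fin d => gaussianReal 0 1)
      {z : Fin d → ℝ | ∑ i, (z i + μ i) ^ 2 < c}
      ≤ ENNReal.ofReal (Real.exp (t * c) *
          ∏ i : Fin d, (Real.exp (-t * (μ i) ^ 2 / (1 + 2 * t)) / Real.sqrt (1 + 2 * t))) := by
  have hfm : Measurable (fun z : Fin d → ℝ => Real.exp (-t * ∑ i, (z i + μ i) ^ 2)) := by
    apply Measurable.exp
    apply Measurable.const_mul
    exact Finset.measurable_sum _ fun i _ => ((measurable_pi_apply i).add_const _).pow_const 2
  have hfnonneg : ∀ z : Fin d → ℝ, 0 ≤ Real.exp (-t * ∑ i, (z i + μ i) ^ 2) :=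
    fun z => Real.exp_nonneg _
  have hint : Integrable (fun z : Fin d → ℝ => Real.exp (-t * ∑ i, (z i + μ i) ^ 2))
      (Measure.pi fun _ : Fin d => gaussianReal 0 1) := by
    refine (integrable_const (1:ℝ)).mono' hfm.aestronglyMeasurable ?_
    filter_upwards with z
    rw [Real.norm_eq_abs, abs_of_nonneg (hfnonneg z)]
    apply Real.exp_le_one_iff.mpr
    have : 0 ≤ ∑ i, (z i + μ i) ^ 2 := Finset.sum_nonneg fun i _ => sq_nonneg _
    nlinarith
  have hsub : {z : Fin d → ℝ | ∑ i, (z i + μ i) ^ 2 < c} ⊆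
      {z : Fin d → ℝ | ENNReal.ofReal (Real.exp (-t * c))
        ≤ ENNReal.ofReal (Real.exp (-t * ∑ i, (z i + μ i) ^ 2))} := by
    intro z hz
    simp only [Set.mem_setOf_eq] at hz ⊢
    apply ENNReal.ofReal_le_ofReal
    apply Real.exp_le_exp.mpr
    nlinarith
  have hεpos : ENNReal.ofReal (Real.exp (-t * c)) ≠ 0 := by
    simp [ENNReal.ofReal_eq_zero, not_le, Real.exp_pos]
  have hεtop : ENNReal.ofReal (Real.exp (-t * c)) ≠ ⊤ := ENNReal.ofReal_ne_top
  have hmarkov := mul_meas_ge_le_lintegral₀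
    (f := fun z : Fin d → ℝ => ENNReal.ofReal (Real.exp (-t * ∑ i, (z i + μ i) ^ 2)))
    (hfm.ennreal_ofReal.aemeasurable) (ENNReal.ofReal (Real.exp (-t * c)))
    (μ := Measure.pi fun _ : Fin d => gaussianReal 0 1)
  have hlint : ∫⁻ z, ENNReal.ofReal (Real.exp (-t * ∑ i, (z i + μ i) ^ 2))
        ∂(Measure.pi fun _ : Fin d => gaussianReal 0 1)
      = ENNReal.ofReal (∫ z, Real.exp (-t * ∑ i, (z i + μ i) ^ 2)
        ∂(Measure.pi fun _ : Fin d => gaussianReal 0 1)) :=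
    (ofReal_integral_eq_lintegral_ofReal hint (Filter.Eventually.of_forall hfnonneg)).symm
  have hprodint : (∫ z, Real.exp (-t * ∑ i, (z i + μ i) ^ 2)
        ∂(Measure.pi fun _ : Fin d => gaussianReal 0 1))
      = ∏ i : Fin d, (Real.exp (-t * (μ i) ^ 2 / (1 + 2 * t)) / Real.sqrt (1 + 2 * t)) := by
    have h1 : ∀ z : Fin d → ℝ, Real.exp (-t * ∑ i, (z i + μ i) ^ 2)
        = ∏ i, Real.exp (-t * (z i + μ i) ^ 2) := by
      intro z
      rw [← Real.exp_sum]
      congr 1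
      rw [Finset.mul_sum]
    simp_rw [h1]
    rw [integral_pi_prod d _ (fun i => inferInstance)
      (fun i y => Real.exp (-t * (y + μ i) ^ 2))]
    exact Finset.prod_congr rfl fun i _ => gauss_sq_mgf t (μ i) ht
  calc (Measure.pi fun _ : Fin d => gaussianReal 0 1)
        {z : Fin d → ℝ | ∑ i, (z i + μ i) ^ 2 < c}
      ≤ (Measure.pi fun _ : Fin d => gaussianReal 0 1)
        {z : Fin d → ℝ | ENNReal.ofReal (Real.exp (-t * c))
          ≤ ENNReal.ofReal (Real.exp (-t * ∑ i, (z i + μ i) ^ 2))} := measure_mono hsub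
    _ ≤ (ENNReal.ofReal (Real.exp (-t * c)))⁻¹ *
          ∫⁻ z, ENNReal.ofReal (Real.exp (-t * ∑ i, (z i + μ i) ^ 2))
            ∂(Measure.pi fun _ : Fin d => gaussianReal 0 1) := by
        rw [← one_mul ((Measure.pi fun _ : Fin d => gaussianReal 0 1) _),
          ← ENNReal.inv_mul_cancel hεpos hεtop, mul_assoc]
        exact mul_le_mul_right hmarkov _
    _ = ENNReal.ofReal (Real.exp (t * c)) *
          ENNReal.ofReal (∏ i : Fin d,
            (Real.exp (-t * (μ i) ^ 2 / (1 + 2 * t)) / Real.sqrt (1 + 2 * t))) := by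
        rw [hlint, hprodint, ← ENNReal.ofReal_inv_of_pos (Real.exp_pos _), ← Real.exp_neg,
          show -(-t * c) = t * c by ring]
    _ = ENNReal.ofReal (Real.exp (t * c) *
          ∏ i : Fin d, (Real.exp (-t * (μ i) ^ 2 / (1 + 2 * t)) / Real.sqrt (1 + 2 * t))) :=
        (ENNReal.ofReal_mul (Real.exp_nonneg _)).symm

/-- Lower tail bound for a noncentral chi-square random variable (Laurent–Massart).
`χ²_d(κ)` is realized as `∑ (Z_i + μ_i)²` with `Z` a `d`-dimensional standard Gaussian
and `∑ μ_i² = κ`. -/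
theorem noncentral_chisq_lower_tail
    (d : ℕ) (hd : 0 < d) (μ : Fin d → ℝ) (κ : ℝ) (hκ : κ = ∑ i, (μ i) ^ 2)
    (x : ℝ) (hx : 0 < x) :
    (Measure.pi fun _ : Fin d => gaussianReal 0 1)
      {z : Fin d → ℝ |
        ∑ i, (z i + μ i) ^ 2 < (d : ℝ) + κ - Real.sqrt ((4 * d + 8 * κ) * x)}
      ≤ ENNReal.ofReal (Real.exp (-x)) := by
  have hκ0 : 0 ≤ κ := hκ ▸ Finset.sum_nonneg fun i _ => sq_nonneg _
  have hd1 : (1:ℝ) ≤ d := by exact_mod_cast hd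
  have ht : 0 ≤ Real.sqrt ((4 * d + 8 * κ) * x) / (2 * ((d : ℝ) + 2 * κ)) := by positivity
  refine le_trans (LM_chernoff_step d μ
    (Real.sqrt ((4 * d + 8 * κ) * x) / (2 * ((d : ℝ) + 2 * κ)))
    ((d : ℝ) + κ - Real.sqrt ((4 * d + 8 * κ) * x)) ht) ?_
  exact ENNReal.ofReal_le_ofReal (LM_key_real_ineq d hd μ κ hκ x hx)
end

section
/- Let τ_0 ~ Beta(1, n) and τ = τ_0^c with c ∈ (α/(α−1), (1+ω/2)/(α−1)) for constants α > 1, ω > 0. Let s_n = o(n), s_n → ∞, and set I_n = [(s_n/n)^{(1+ω/2)/(α−1)}, (s_n/n)^{α/(α−1)}]. Then −log P(τ ∈ I_n) = o(s_n log(n/s_n)) as n → ∞. -/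
open Real Filter MeasureTheory

lemma aux_integral (u v : ℝ) (huv : u ≤ v) (n : ℕ) :
    ∫ t in Set.Icc u v, (n : ℝ) * (1 - t) ^ (n - 1) =
      (1 - u) ^ n - (1 - v) ^ n := by
  rw [MeasureTheory.integral_Icc_eq_integral_Ioc,
    ← intervalIntegral.integral_of_le huv]
  have h : ∀ x ∈ Set.uIcc u v,
      HasDerivAt (fun t : ℝ => -(1 - t) ^ n) ((n : ℝ) * (1 - x) ^ (n - 1)) x := by
    intro x _
    have h1 : HasDerivAt (fun t : ℝ => 1 - t) (-1) x := by
      simpa using (hasDerivAt_id x).const_sub 1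
    have h2 : HasDerivAt (fun t : ℝ => -(1 - t) ^ n) (-((n : ℝ) * (1 - x) ^ (n - 1) * -1)) x :=
      (h1.pow n).neg
    convert h2 using 1
    ring
  rw [intervalIntegral.integral_eq_sub_of_hasDerivAt h
    (by apply Continuous.intervalIntegrable; continuity)]
  ring

lemma aux_set (c u v : ℝ) (hc : 0 < c) (hu : 0 < u) (huv : u ≤ v) (hv : v ≤ 1) :
    Set.Icc (0 : ℝ) 1 ∩ {t : ℝ | t ^ c ∈ Set.Icc (u ^ c) (v ^ c)} = Set.Icc u v := by
  ext t
  simp only [Set.mem_inter_iff, Set.mem_Icc, Set.mem_setOf_eq]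
  constructor
  · rintro ⟨⟨ht0, _⟩, h1, h2⟩
    exact ⟨(Real.rpow_le_rpow_iff hu.le ht0 hc).mp h1,
      (Real.rpow_le_rpow_iff ht0 (by linarith) hc).mp h2⟩
  · rintro ⟨h1, h2⟩
    have ht0 : 0 ≤ t := le_trans hu.le h1
    exact ⟨⟨ht0, le_trans h2 hv⟩, Real.rpow_le_rpow hu.le h1 hc.le,
      Real.rpow_le_rpow ht0 h2 hc.le⟩

lemma aux_exp_le (t : ℝ) (h0 : 0 ≤ t) (h2 : t ≤ 1 / 2) :
    Real.exp (-(2 * t)) ≤ 1 - t := by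
  have h3 : 1 ≤ (1 - t) * Real.exp (2 * t) := by
    nlinarith [Real.add_one_le_exp (2 * t)]
  have h4 := Real.exp_pos (2 * t)
  have : Real.exp (-(2 * t)) = (Real.exp (2 * t))⁻¹ := Real.exp_neg _
  rw [this]
  rw [inv_le_iff_one_le_mul₀ h4]
  linarith [h3]

set_option maxHeartbeats 1600000 in
/-- The Beta modeling `τ = τ₀^c`, `τ₀ ~ Beta(1,n)`, places enough mass on the optimal
range `I_n = [(s_n/n)^{(1+ω/2)/(α−1)}, (s_n/n)^{α/(α−1)}]`:
`−log P(τ ∈ I_n) = o(s_n log(n/s_n))`. -/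
theorem beta_prior_optimal_range_mass
    (α ω c : ℝ) (hα : 1 < α) (hω : 0 < ω)
    (hc : c ∈ Set.Ioo (α / (α - 1)) ((1 + ω / 2) / (α - 1)))
    (s : ℕ → ℝ) (hs1 : ∀ n, 1 ≤ s n)
    (hso : Tendsto (fun n : ℕ => s n / n) atTop (nhds 0))
    (hsi : Tendsto s atTop atTop)
    (P : ℕ → ℝ)
    (hP : ∀ n : ℕ, P n =
      ∫ t in Set.Icc (0 : ℝ) 1 ∩
          {t : ℝ | t ^ c ∈ Set.Icc ((s n / n) ^ ((1 + ω / 2) / (α - 1)))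
            ((s n / n) ^ (α / (α - 1)))},
        (n : ℝ) * (1 - t) ^ (n - 1)) :
    Tendsto (fun n : ℕ => (-Real.log (P n)) / (s n * Real.log (n / s n)))
      atTop (nhds 0) := by
  obtain ⟨hc1, hc2⟩ := hc
  have hα0 : (0 : ℝ) < α - 1 := by linarith
  have hc0 : 0 < c := lt_trans (by positivity) hc1
  set γ : ℝ := (1 + ω / 2) / ((α - 1) * c) with hγdef
  set θ : ℝ := α / ((α - 1) * c) with hθdef
  have hθ0 : 0 < θ := by positivity
  have hθ1 : θ < 1 := by
    rw [hθdef, div_lt_one (by positivity)]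
    rw [div_lt_iff₀ hα0] at hc1
    linarith [hc1]
  have hγ1 : 1 < γ := by
    rw [hγdef, lt_div_iff₀ (by positivity)]
    rw [lt_div_iff₀ hα0] at hc2
    linarith [hc2]
  have hγθ : θ < γ := lt_trans hθ1 hγ1
  set x : ℕ → ℝ := fun n => s n / n with hxdef
  -- basic eventual facts
  have hxp : ∀ p : ℝ, 0 < p → Tendsto (fun n => x n ^ p) atTop (nhds 0) := by
    intro p hp
    have := hso.rpow_const (Or.inr hp.le)
    rwa [Real.zero_rpow hp.ne'] at this
  have h1 : ∀ᶠ n : ℕ in atTop, 1 ≤ n := eventually_ge_atTop 1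
  have h2 : ∀ᶠ n : ℕ in atTop, x n < Real.exp (-1) :=
    hso.eventually_lt_const (Real.exp_pos _)
  have h3 : ∀ᶠ n : ℕ in atTop, x n ^ θ < 1 / 2 :=
    (hxp θ hθ0).eventually_lt_const (by norm_num)
  have h4 : ∀ᶠ n : ℕ in atTop, x n ^ (γ - θ) < 1 / 4 :=
    (hxp (γ - θ) (by linarith)).eventually_lt_const (by norm_num)
  have h5 : ∀ᶠ n : ℕ in atTop, 2 * Real.log 2 ≤ (n : ℝ) ^ (1 - θ) := by
    have := (tendsto_rpow_atTop (y := 1 - θ) (by linarith)).comp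
      (tendsto_natCast_atTop_atTop (R := ℝ))
    exact this.eventually_ge_atTop _
  have hs0 : ∀ n, 0 < s n := fun n => lt_of_lt_of_le one_pos (hs1 n)
  have hx0 : ∀ n : ℕ, 1 ≤ n → 0 < x n := fun n hn => by
    have hn0 : (0 : ℝ) < n := by exact_mod_cast hn
    exact div_pos (hs0 n) hn0
  have hL : ∀ᶠ n : ℕ in atTop, 1 ≤ Real.log ((n : ℝ) / s n) := by
    filter_upwards [h1, h2] with n hn hxe
    have hxn := hx0 n hn
    have hinv : (n : ℝ) / s n = (x n)⁻¹ := by rw [hxdef]; simp [inv_div]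
    rw [hinv, Real.log_inv]
    have hlt := Real.log_lt_log hxn hxe
    rw [Real.log_exp] at hlt
    linarith
  -- denominator tends to atTop
  have hSL : Tendsto (fun n => s n * Real.log ((n : ℝ) / s n)) atTop atTop := by
    apply tendsto_atTop_mono' atTop (f₁ := s) _ hsi
    filter_upwards [hL] with n hn
    nlinarith [hs0 n, hs1 n]
  -- the main eventual bound
  have main : ∀ᶠ n : ℕ in atTop,
      0 ≤ (-Real.log (P n)) / (s n * Real.log ((n : ℝ) / s n)) ∧
      (-Real.log (P n)) / (s n * Real.log ((n : ℝ) / s n)) ≤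
        Real.log 2 / (s n * Real.log ((n : ℝ) / s n)) + 2 * x n ^ (γ - 1) := by
    filter_upwards [h1, h2, h3, h4, h5, hL] with n hn1 hn2 hn3 hn4 hn5 hnL
    have hn0 : (0 : ℝ) < n := by exact_mod_cast hn1
    have hxn : 0 < x n := hx0 n hn1
    have hxn1 : x n ≤ 1 := by
      have : Real.exp (-1) < 1 := Real.exp_lt_one_iff.mpr (by norm_num)
      linarith
    set u : ℝ := x n ^ γ with hudef
    set v : ℝ := x n ^ θ with hvdef
    have hu0 : 0 < u := Real.rpow_pos_of_pos hxn γ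
    have hv0 : 0 < v := Real.rpow_pos_of_pos hxn θ
    have hv2 : v ≤ 1 / 2 := le_of_lt hn3
    have huv4 : u ≤ v / 4 := by
      have heq : u = v * x n ^ (γ - θ) := by
        rw [hudef, hvdef, ← Real.rpow_add hxn]; ring_nf
      rw [heq]
      nlinarith [hv0, hn4, (Real.rpow_pos_of_pos hxn (γ - θ)).le]
    have huv : u ≤ v := by linarith
    have hv1 : v ≤ 1 := by linarith
    have hnv : 2 * Real.log 2 ≤ (n : ℝ) * v := by
      have hxn' : (1 : ℝ) / n ≤ x n := by
        show (1 : ℝ) / n ≤ s n / n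
        gcongr
        exact hs1 n
      have hvge : (n : ℝ) ^ (-θ) ≤ v := by
        rw [hvdef, Real.rpow_neg hn0.le, ← Real.inv_rpow hn0.le]
        exact Real.rpow_le_rpow (by positivity) (by rw [inv_eq_one_div]; exact hxn') hθ0.le
      have hsplit : (n : ℝ) ^ (1 - θ) = n * (n : ℝ) ^ (-θ) := by
        rw [show (1 : ℝ) - θ = 1 + (-θ) by ring, Real.rpow_add hn0, Real.rpow_one]
      nlinarith [mul_le_mul_of_nonneg_left hvge hn0.le]
    -- compute P n
    have hPeq : P n = (1 - u) ^ n - (1 - v) ^ n := by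
      rw [hP n]
      have e1 : (s n / (n : ℝ)) ^ ((1 + ω / 2) / (α - 1)) = u ^ c := by
        rw [hudef, ← Real.rpow_mul hxn.le]
        have hxeq : x n = s n / (n : ℝ) := by rw [hxdef]
        rw [hxeq]
        congr 1
        rw [hγdef]
        field_simp
      have e2 : (s n / (n : ℝ)) ^ (α / (α - 1)) = v ^ c := by
        rw [hvdef, ← Real.rpow_mul hxn.le]
        have hxeq : x n = s n / (n : ℝ) := by rw [hxdef]
        rw [hxeq]
        congr 1
        rw [hθdef]
        field_simp
      rw [e1, e2, aux_set c u v hc0 hu0 huv hv1, aux_integral u v huv n]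
    -- lower bound on P n
    have hub : Real.exp (-(2 * ((n : ℝ) * u))) ≤ (1 - u) ^ n := by
      have hle : Real.exp (-(2 * u)) ≤ 1 - u := aux_exp_le u hu0.le (by linarith)
      calc Real.exp (-(2 * ((n : ℝ) * u))) = Real.exp (-(2 * u)) ^ n := by
            rw [← Real.exp_nat_mul]; congr 1; ring
        _ ≤ (1 - u) ^ n := pow_le_pow_left₀ (Real.exp_pos _).le hle n
    have hvb : (1 - v) ^ n ≤ Real.exp (-((n : ℝ) * v)) := by
      have hle : 1 - v ≤ Real.exp (-v) := by linarith [Real.add_one_le_exp (-v)]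
      calc (1 - v) ^ n ≤ Real.exp (-v) ^ n := pow_le_pow_left₀ (by linarith) hle n
        _ = Real.exp (-((n : ℝ) * v)) := by rw [← Real.exp_nat_mul]; congr 1; ring
    have hcmp : Real.exp (-((n : ℝ) * v)) ≤ (1 / 2) * Real.exp (-(2 * ((n : ℝ) * u))) := by
      have h12 : (1 / 2 : ℝ) = Real.exp (-(Real.log 2)) := by
        rw [Real.exp_neg, Real.exp_log two_pos]; norm_num
      rw [h12, ← Real.exp_add]
      apply Real.exp_le_exp.mpr
      have hnu : (n : ℝ) * u ≤ (n : ℝ) * (v / 4) := mul_le_mul_of_nonneg_left huv4 hn0.le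
      have hnv4 : (n : ℝ) * (v / 4) = ((n : ℝ) * v) / 4 := by ring
      linarith [hnu, hnv]
    have hPl : (1 / 2) * Real.exp (-(2 * ((n : ℝ) * u))) ≤ P n := by
      rw [hPeq]; linarith
    have hP0 : 0 < P n := lt_of_lt_of_le (by positivity) hPl
    have hP1 : P n ≤ 1 := by
      rw [hPeq]
      have hle1 : (1 - u) ^ n ≤ 1 := pow_le_one₀ (by linarith) (by linarith)
      have hnn : (0 : ℝ) ≤ (1 - v) ^ n := pow_nonneg (by linarith) n
      linarith
    have hlog : -Real.log (P n) ≤ Real.log 2 + 2 * ((n : ℝ) * u) := by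
      have hll := Real.log_le_log (by positivity) hPl
      rw [Real.log_mul (by norm_num) (Real.exp_ne_zero _), Real.log_exp,
        one_div, Real.log_inv] at hll
      linarith
    have hsplit : u = x n * x n ^ (γ - 1) := by
      rw [hudef]
      have h := Real.rpow_add hxn 1 (γ - 1)
      rw [Real.rpow_one] at h
      rw [show (1 : ℝ) + (γ - 1) = γ by ring] at h
      exact h
    have hnmul : (n : ℝ) * x n = s n := by
      rw [hxdef]; field_simp
    have hnum : (n : ℝ) * u = s n * x n ^ (γ - 1) := by
      rw [hsplit, ← mul_assoc, hnmul]
    have hD : 0 < s n * Real.log ((n : ℝ) / s n) := by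
      have := hs0 n
      nlinarith
    constructor
    · apply div_nonneg _ hD.le
      have := Real.log_nonpos hP0.le hP1
      linarith
    · have hw0 : (0 : ℝ) ≤ x n ^ (γ - 1) := (Real.rpow_pos_of_pos hxn _).le
      calc (-Real.log (P n)) / (s n * Real.log ((n : ℝ) / s n))
          ≤ (Real.log 2 + 2 * (s n * x n ^ (γ - 1))) / (s n * Real.log ((n : ℝ) / s n)) := by
            apply (div_le_div_iff_of_pos_right hD).mpr
            rw [← hnum]
            exact hlog
        _ = Real.log 2 / (s n * Real.log ((n : ℝ) / s n))
            + (2 * (s n * x n ^ (γ - 1))) / (s n * Real.log ((n : ℝ) / s n)) := by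
            rw [add_div]
        _ ≤ Real.log 2 / (s n * Real.log ((n : ℝ) / s n)) + 2 * x n ^ (γ - 1) := by
            have hnd : (2 * (s n * x n ^ (γ - 1))) / (s n * Real.log ((n : ℝ) / s n))
                ≤ (2 * (s n * x n ^ (γ - 1))) / (s n * 1) := by
              apply div_le_div_of_nonneg_left
                (mul_nonneg (by norm_num) (mul_nonneg (hs0 n).le hw0))
                (by have := hs0 n; nlinarith)
              have := hs0 n; nlinarith
            have heq2 : (2 * (s n * x n ^ (γ - 1))) / (s n * 1) = 2 * x n ^ (γ - 1) := by
              rw [mul_one, mul_div_assoc, mul_div_cancel_left₀ _ (hs0 n).ne']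
            linarith [heq2 ▸ hnd]
  -- squeeze
  have hg : Tendsto (fun n : ℕ => Real.log 2 / (s n * Real.log ((n : ℝ) / s n))
      + 2 * x n ^ (γ - 1)) atTop (nhds 0) := by
    have t1 : Tendsto (fun n : ℕ => Real.log 2 / (s n * Real.log ((n : ℝ) / s n)))
        atTop (nhds 0) := Tendsto.div_atTop tendsto_const_nhds hSL
    have t2 : Tendsto (fun n : ℕ => 2 * x n ^ (γ - 1)) atTop (nhds 0) := by
      have := (hxp (γ - 1) (by linarith)).const_mul 2
      simpa using this
    simpa using t1.add t2
  exact tendsto_of_tendsto_of_tendsto_of_le_of_le' tendsto_const_nhds hg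
    (main.mono fun n h => h.1) (main.mono fun n h => h.2)
end
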